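/- Let 0 = x_0 < … < x_N = 1 be a mesh, ε > 0, and b, c : [0,1] → ℝ continuous. For every u ∈ C³[0,1] and every index 1 ≤ i ≤ N−1 with h_i ≤ h_{i+1}, the consistency error satisfies |τ_i[u]| ≤ C h_{i+1} ( ε · max_{x ∈ [x_{i−1}, x_{i+1}]} |u‴(x)| + max_{x ∈ [x_{i−1}, x_{i+1}]} |u″(x)| ), where C depends only on max|b|. -/

import Mathlib

/-- The consistency error `τ_i[u]` of the upwind scheme at an interior mesh point. -/
noncomputable def tau (b c : ℝ → ℝ) (ε : ℝ) (x : ℕ → ℝ) (u : ℝ → ℝ) (i : ℕ) : ℝ :=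
  let h : ℕ → ℝ := fun k => x k - x (k - 1)
  let hb : ℝ := (h i + h (i + 1)) / 2
  let D1 : ℝ := (u (x (i + 1)) - u (x i)) / h (i + 1)
  let D2 : ℝ := ((u (x (i + 1)) - u (x i)) / h (i + 1) - (u (x i) - u (x (i - 1))) / h i) / hb
  (-ε * D2 - b (x i) * D1 + c (x i) * u (x i)) -
    (-ε * iteratedDeriv 2 u (x i) - b (x i) * deriv u (x i) + c (x i) * u (x i))

/-- Supremum of `|g|` over a set. -/
noncomputable def supAbs (g : ℝ → ℝ) (s : Set ℝ) : ℝ := sSup ((fun t => |g t|) '' s)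

/-- Mean-value bound. -/
lemma key_mvt (f f' : ℝ → ℝ) (hf : ∀ t, HasDerivAt f (f' t) t) {M a y : ℝ}
    (hM : ∀ t ∈ Set.uIcc a y, |f' t| ≤ M) : |f y - f a| ≤ M * |y - a| := by
  have := (convex_uIcc a y).norm_image_sub_le_of_norm_hasDerivWithin_le
    (f' := f') (fun t ht => (hf t).hasDerivWithinAt)
    (fun t ht => by simpa using hM t ht) Set.left_mem_uIcc Set.right_mem_uIcc
  simpa [Real.norm_eq_abs] using this

lemma taylor1 (u : ℝ → ℝ) (hu : ContDiff ℝ 3 u) (a y M : ℝ)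
    (hM : ∀ t ∈ Set.uIcc a y, |iteratedDeriv 2 u t| ≤ M) :
    |u y - u a - deriv u a * (y - a)| ≤ M * |y - a| ^ 2 := by
  have hd1 : Differentiable ℝ (deriv u) := by
    have := hu.differentiable_iteratedDeriv 1 (by norm_num)
    simpa [iteratedDeriv_one] using this
  have hd0 : Differentiable ℝ u := hu.differentiable (by norm_num)
  have hder2 : ∀ t, HasDerivAt (deriv u) (iteratedDeriv 2 u t) t := by
    intro t
    have : iteratedDeriv 2 u = deriv (deriv u) := by
      rw [iteratedDeriv_succ, iteratedDeriv_one]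
    rw [this]
    exact (hd1 t).hasDerivAt
  -- bound on deriv u t - deriv u a
  have step1 : ∀ t ∈ Set.uIcc a y, |deriv u t - deriv u a| ≤ M * |y - a| := by
    intro t ht
    have hsub : Set.uIcc a t ⊆ Set.uIcc a y := Set.uIcc_subset_uIcc Set.left_mem_uIcc ht
    have := key_mvt (deriv u) (iteratedDeriv 2 u) hder2
      (a := a) (y := t) (M := M) (fun s hs => hM s (hsub hs))
    refine this.trans ?_
    have habs : |t - a| ≤ |y - a| := by
      rw [Set.uIcc_eq_union] at ht
      rcases ht with h | h <;> rw [abs_le] <;> cases abs_cases (y - a) <;>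
        constructor <;> simp at h <;> linarith [h.1, h.2]
    have hM0 : 0 ≤ M := le_trans (abs_nonneg _) (hM a Set.left_mem_uIcc)
    exact mul_le_mul_of_nonneg_left habs hM0
  -- apply to g
  set g : ℝ → ℝ := fun t => u t - u a - deriv u a * (t - a) with hg
  have hgd : ∀ t, HasDerivAt g (deriv u t - deriv u a) t := by
    intro t
    have h1 : HasDerivAt (fun t : ℝ => deriv u a * (t - a)) (deriv u a) t := by
      simpa using ((hasDerivAt_id t).sub_const a).const_mul (deriv u a)
    exact ((hd0 t).hasDerivAt.sub_const (u a)).sub h1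
  have := key_mvt g (fun t => deriv u t - deriv u a) hgd (a := a) (y := y)
    (M := M * |y - a|) step1
  have hga : g a = 0 := by simp [hg]
  calc |u y - u a - deriv u a * (y - a)| = |g y - g a| := by rw [hga, sub_zero, hg]
    _ ≤ M * |y - a| * |y - a| := this
    _ = M * |y - a| ^ 2 := by ring

lemma taylor2 (u : ℝ → ℝ) (hu : ContDiff ℝ 3 u) (a y M : ℝ)
    (hM : ∀ t ∈ Set.uIcc a y, |iteratedDeriv 3 u t| ≤ M) :
    |u y - u a - deriv u a * (y - a) - iteratedDeriv 2 u a * (y - a) ^ 2 / 2|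
      ≤ M * |y - a| ^ 3 := by
  have hd0 : Differentiable ℝ u := hu.differentiable (by norm_num)
  have hd1 : Differentiable ℝ (deriv u) := by
    have := hu.differentiable_iteratedDeriv 1 (by norm_num)
    simpa [iteratedDeriv_one] using this
  have hd2 : Differentiable ℝ (iteratedDeriv 2 u) :=
    hu.differentiable_iteratedDeriv 2 (by norm_num)
  have hder2 : ∀ t, HasDerivAt (deriv u) (iteratedDeriv 2 u t) t := by
    intro t
    have h : iteratedDeriv 2 u = deriv (deriv u) := by
      rw [iteratedDeriv_succ, iteratedDeriv_one]
    rw [h]; exact (hd1 t).hasDerivAt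
  have hder3 : ∀ t, HasDerivAt (iteratedDeriv 2 u) (iteratedDeriv 3 u t) t := by
    intro t
    have h : iteratedDeriv 3 u = deriv (iteratedDeriv 2 u) := iteratedDeriv_succ
    rw [h]; exact (hd2 t).hasDerivAt
  have hM0 : 0 ≤ M := le_trans (abs_nonneg _) (hM a Set.left_mem_uIcc)
  have habs : ∀ t ∈ Set.uIcc a y, |t - a| ≤ |y - a| := by
    intro t ht
    rw [Set.uIcc_eq_union] at ht
    rcases ht with h | h <;> rw [abs_le] <;> cases abs_cases (y - a) <;>
      constructor <;> simp at h <;> linarith [h.1, h.2]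
  -- step 1
  have step1 : ∀ t ∈ Set.uIcc a y, |iteratedDeriv 2 u t - iteratedDeriv 2 u a| ≤ M * |y - a| := by
    intro t ht
    have hsub : Set.uIcc a t ⊆ Set.uIcc a y := Set.uIcc_subset_uIcc Set.left_mem_uIcc ht
    have := key_mvt (iteratedDeriv 2 u) (iteratedDeriv 3 u) hder3
      (a := a) (y := t) (M := M) (fun s hs => hM s (hsub hs))
    exact this.trans (mul_le_mul_of_nonneg_left (habs t ht) hM0)
  -- step 2
  set φ : ℝ → ℝ := fun t => deriv u t - deriv u a - iteratedDeriv 2 u a * (t - a) with hφ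
  have hφd : ∀ t, HasDerivAt φ (iteratedDeriv 2 u t - iteratedDeriv 2 u a) t := by
    intro t
    have h1 : HasDerivAt (fun t : ℝ => iteratedDeriv 2 u a * (t - a)) (iteratedDeriv 2 u a) t := by
      simpa using ((hasDerivAt_id t).sub_const a).const_mul (iteratedDeriv 2 u a)
    exact ((hder2 t).sub_const (deriv u a)).sub h1
  have step2 : ∀ t ∈ Set.uIcc a y, |φ t| ≤ M * |y - a| ^ 2 := by
    intro t ht
    have hsub : Set.uIcc a t ⊆ Set.uIcc a y := Set.uIcc_subset_uIcc Set.left_mem_uIcc ht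
    have := key_mvt φ (fun s => iteratedDeriv 2 u s - iteratedDeriv 2 u a) hφd
      (a := a) (y := t) (M := M * |y - a|) (fun s hs => step1 s (hsub hs))
    have hφa : φ a = 0 := by simp [hφ]
    rw [hφa, sub_zero] at this
    calc |φ t| ≤ M * |y - a| * |t - a| := this
      _ ≤ M * |y - a| * |y - a| :=
        mul_le_mul_of_nonneg_left (habs t ht) (by positivity)
      _ = M * |y - a| ^ 2 := by ring
  -- step 3
  set g : ℝ → ℝ := fun t => u t - u a - deriv u a * (t - a)
    - iteratedDeriv 2 u a * (t - a) ^ 2 / 2 with hgdef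
  have hgd : ∀ t, HasDerivAt g (φ t) t := by
    intro t
    have h1 : HasDerivAt (fun t : ℝ => deriv u a * (t - a)) (deriv u a) t := by
      simpa using ((hasDerivAt_id t).sub_const a).const_mul (deriv u a)
    have h2 : HasDerivAt (fun t : ℝ => iteratedDeriv 2 u a * (t - a) ^ 2 / 2)
        (iteratedDeriv 2 u a * (t - a)) t := by
      have hsq : HasDerivAt (fun t : ℝ => (t - a) ^ 2) (2 * (t - a)) t := by
        have := (((hasDerivAt_id t).sub_const a).pow 2); simp at this; exact this
      have := (hsq.const_mul (iteratedDeriv 2 u a)).div_const 2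
      exact this.congr_deriv (by ring)
    have := (((hd0 t).hasDerivAt.sub_const (u a)).sub h1).sub h2
    exact this
  have := key_mvt g φ hgd (a := a) (y := y) (M := M * |y - a| ^ 2) step2
  have hga : g a = 0 := by simp [hgdef]
  rw [hga, sub_zero] at this
  calc |u y - u a - deriv u a * (y - a) - iteratedDeriv 2 u a * (y - a) ^ 2 / 2|
      = |g y| := rfl
    _ ≤ M * |y - a| ^ 2 * |y - a| := this
    _ = M * |y - a| ^ 3 := by ring

lemma tau_alg (ε bb cc hm hp up u0 um d1 d2 : ℝ) (hmne : hm ≠ 0) (hpne : hp ≠ 0)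
    (hsne : hm + hp ≠ 0) :
    (-ε * (((up - u0) / hp - (u0 - um) / hm) / ((hm + hp) / 2)) - bb * ((up - u0) / hp)
        + cc * u0) - (-ε * d2 - bb * d1 + cc * u0)
      = -ε * (((up - u0 - d1 * hp - d2 * hp ^ 2 / 2) / hp
            + (um - u0 + d1 * hm - d2 * hm ^ 2 / 2) / hm) / ((hm + hp) / 2))
        - bb * ((up - u0 - d1 * hp) / hp) := by
  field_simp
  ring

set_option maxHeartbeats 1000000 in
/-- on an arbitrary mesh, for `u ∈ C³` and interior indices with
`h_i ≤ h_{i+1}`, the consistency error satisfies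
`|τ_i[u]| ≤ C h_{i+1}(ε‖u‴‖_i + ‖u″‖_i)`, with `C` depending only on `max |b|`. -/
theorem stmt_15 (b c : ℝ → ℝ) (hb : ContinuousOn b (Set.Icc 0 1))
    (hc : ContinuousOn c (Set.Icc 0 1)) :
    ∃ C : ℝ, 0 < C ∧
      ∀ (ε : ℝ) (N : ℕ) (x : ℕ → ℝ) (u : ℝ → ℝ) (i : ℕ),
        0 < ε → 2 ≤ N → x 0 = 0 → x N = 1 → (∀ k < N, x k < x (k + 1)) →
        ContDiff ℝ 3 u → 1 ≤ i → i + 1 ≤ N →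
        x i - x (i - 1) ≤ x (i + 1) - x i →
        |tau b c ε x u i| ≤
          C * (x (i + 1) - x i) *
            (ε * supAbs (iteratedDeriv 3 u) (Set.Icc (x (i - 1)) (x (i + 1))) +
              supAbs (iteratedDeriv 2 u) (Set.Icc (x (i - 1)) (x (i + 1)))) := by
  obtain ⟨B0, hB0⟩ := isCompact_Icc.exists_bound_of_continuousOn hb
  set B : ℝ := max B0 0 with hBdef
  have hBnn : 0 ≤ B := le_max_right _ _
  refine ⟨B + 4, by positivity, ?_⟩
  intro ε N x u i hε hN hx0 hxN hmono hu hi hiN hhle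
  -- basic mesh facts
  have hi1 : i - 1 + 1 = i := Nat.succ_pred_eq_of_pos hi
  have hlt1 : x (i - 1) < x i := by
    have := hmono (i - 1) (by omega)
    rwa [hi1] at this
  have hlt2 : x i < x (i + 1) := hmono i (by omega)
  set am := x (i - 1) with ham
  set a := x i with haa
  set ap := x (i + 1) with hap
  set hm := a - am with hhm
  set hp := ap - a with hhp
  have hmpos : 0 < hm := by simp [hhm]; linarith
  have hppos : 0 < hp := by simp [hhp]; linarith
  -- monotone up to N
  have mono : ∀ k, k ≤ N → ∀ j, j ≤ k → x j ≤ x k := by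
    intro k hk
    induction k with
    | zero => intro j hj; have hj0 : j = 0 := Nat.le_zero.mp hj; rw [hj0]
    | succ n ih =>
      intro j hj
      rcases Nat.eq_or_lt_of_le hj with h | h
      · rw [h]
      · have h1 : x j ≤ x n := ih (by omega) j (by omega)
        have h2 : x n < x (n + 1) := hmono n (by omega)
        linarith
  have ham0 : 0 ≤ am := by
    have := mono (i - 1) (by omega) 0 (by omega)
    rw [← hx0]; exact this
  have hap1 : ap ≤ 1 := by
    have := mono N (le_refl N) (i + 1) hiN
    rw [← hxN]; exact this
  have haI : a ∈ Set.Icc (0 : ℝ) 1 := ⟨by linarith, by linarith⟩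
  have hbB : |b a| ≤ B := le_trans (by simpa using hB0 a haI) (le_max_left _ _)
  -- sup bounds
  have hsub3 : ContinuousOn (fun t => |iteratedDeriv 3 u t|) (Set.Icc am ap) :=
    ((hu.continuous_iteratedDeriv 3 le_rfl).abs).continuousOn
  have hsub2 : ContinuousOn (fun t => |iteratedDeriv 2 u t|) (Set.Icc am ap) :=
    ((hu.continuous_iteratedDeriv 2 (by norm_num)).abs).continuousOn
  set M3 := supAbs (iteratedDeriv 3 u) (Set.Icc am ap) with hM3def
  set M2 := supAbs (iteratedDeriv 2 u) (Set.Icc am ap) with hM2def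
  have hbdd3 : BddAbove ((fun t => |iteratedDeriv 3 u t|) '' Set.Icc am ap) :=
    (isCompact_Icc.image_of_continuousOn hsub3).bddAbove
  have hbdd2 : BddAbove ((fun t => |iteratedDeriv 2 u t|) '' Set.Icc am ap) :=
    (isCompact_Icc.image_of_continuousOn hsub2).bddAbove
  have hM3 : ∀ t ∈ Set.Icc am ap, |iteratedDeriv 3 u t| ≤ M3 := fun t ht =>
    le_csSup hbdd3 ⟨t, ht, rfl⟩
  have hM2 : ∀ t ∈ Set.Icc am ap, |iteratedDeriv 2 u t| ≤ M2 := fun t ht =>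
    le_csSup hbdd2 ⟨t, ht, rfl⟩
  have hamem : a ∈ Set.Icc am ap := ⟨le_of_lt hlt1, le_of_lt hlt2⟩
  have hM3nn : 0 ≤ M3 := le_trans (abs_nonneg _) (hM3 a hamem)
  have hM2nn : 0 ≤ M2 := le_trans (abs_nonneg _) (hM2 a hamem)
  -- uIcc inclusions
  have hsubp : Set.uIcc a ap ⊆ Set.Icc am ap := by
    rw [Set.uIcc_of_le (le_of_lt hlt2)]
    exact Set.Icc_subset_Icc (le_of_lt hlt1) le_rfl
  have hsubm : Set.uIcc a am ⊆ Set.Icc am ap := by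
    rw [Set.uIcc_of_ge (le_of_lt hlt1)]
    exact Set.Icc_subset_Icc le_rfl (le_of_lt hlt2)
  -- Taylor remainders
  set Rp := u ap - u a - deriv u a * hp - iteratedDeriv 2 u a * hp ^ 2 / 2 with hRp
  set Rm := u am - u a + deriv u a * hm - iteratedDeriv 2 u a * hm ^ 2 / 2 with hRm
  set R1 := u ap - u a - deriv u a * hp with hR1
  have hRpb : |Rp| ≤ M3 * hp ^ 3 := by
    have := taylor2 u hu a ap M3 (fun t ht => hM3 t (hsubp ht))
    rw [abs_of_pos (by linarith : (0:ℝ) < ap - a)] at this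
    simpa [hRp, hhp] using this
  have hRmb : |Rm| ≤ M3 * hm ^ 3 := by
    have := taylor2 u hu a am M3 (fun t ht => hM3 t (hsubm ht))
    rw [abs_of_neg (by linarith : am - a < 0)] at this
    have h2 : u am - u a - deriv u a * (am - a) - iteratedDeriv 2 u a * (am - a) ^ 2 / 2 = Rm := by
      rw [hRm, hhm]; ring
    rw [h2] at this
    convert this using 2
    rw [hhm]; ring
  have hR1b : |R1| ≤ M2 * hp ^ 2 := by
    have := taylor1 u hu a ap M2 (fun t ht => hM2 t (hsubp ht))
    rw [abs_of_pos (by linarith : (0:ℝ) < ap - a)] at this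
    simpa [hR1, hhp] using this
  -- rewrite tau
  have hkey : tau b c ε x u i =
      -ε * ((Rp / hp + Rm / hm) / ((hm + hp) / 2)) - b a * (R1 / hp) := by
    show (-ε * (((u ap - u a) / hp - (u a - u am) / hm) / ((hm + hp) / 2))
        - b a * ((u ap - u a) / hp) + c a * u a)
      - (-ε * iteratedDeriv 2 u a - b a * deriv u a + c a * u a) = _
    rw [tau_alg ε (b a) (c a) hm hp (u ap) (u a) (u am) (deriv u a) (iteratedDeriv 2 u a)
      hmpos.ne' hppos.ne' (by linarith)]
  rw [hkey]
  clear_value R1 Rm Rp M2 M3 hp hm ap a am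
  -- bounds
  have e1 : |R1 / hp| ≤ M2 * hp := by
    rw [abs_div, abs_of_pos hppos, div_le_iff₀ hppos]
    calc |R1| ≤ M2 * hp ^ 2 := hR1b
      _ = M2 * hp * hp := by ring
  have e2 : |(Rp / hp + Rm / hm) / ((hm + hp) / 2)| ≤ 4 * M3 * hp := by
    have t1 : |Rp / hp| ≤ M3 * hp ^ 2 := by
      rw [abs_div, abs_of_pos hppos, div_le_iff₀ hppos]
      calc |Rp| ≤ M3 * hp ^ 3 := hRpb
        _ = M3 * hp ^ 2 * hp := by ring
    have t2 : |Rm / hm| ≤ M3 * hp ^ 2 := by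
      rw [abs_div, abs_of_pos hmpos, div_le_iff₀ hmpos]
      calc |Rm| ≤ M3 * hm ^ 3 := hRmb
        _ ≤ M3 * hp ^ 2 * hm := by nlinarith [mul_nonneg (mul_nonneg hM3nn hmpos.le) (mul_nonneg (sub_nonneg.mpr hhle) (add_nonneg hppos.le hmpos.le))]
    have hsum : |Rp / hp + Rm / hm| ≤ 2 * M3 * hp ^ 2 := by
      calc |Rp / hp + Rm / hm| ≤ |Rp / hp| + |Rm / hm| := abs_add_le _ _
        _ ≤ 2 * M3 * hp ^ 2 := by linarith
    have hmid : (0:ℝ) < (hm + hp) / 2 := by linarith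
    rw [abs_div, abs_of_pos hmid, div_le_iff₀ hmid]
    nlinarith [hsum, mul_nonneg (mul_nonneg hM3nn hppos.le) hmpos.le]
  calc |-ε * ((Rp / hp + Rm / hm) / ((hm + hp) / 2)) - b a * (R1 / hp)|
      ≤ |(-ε) * ((Rp / hp + Rm / hm) / ((hm + hp) / 2))| + |b a * (R1 / hp)| :=
        abs_sub _ _
    _ = ε * |(Rp / hp + Rm / hm) / ((hm + hp) / 2)| + |b a| * |R1 / hp| := by
        rw [abs_mul, abs_mul, abs_neg, abs_of_pos hε]
    _ ≤ ε * (4 * M3 * hp) + B * (M2 * hp) := by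
        gcongr
    _ ≤ (B + 4) * hp * (ε * M3 + M2) := by
        nlinarith [mul_nonneg (mul_nonneg (mul_nonneg hBnn hppos.le) hε.le) hM3nn,
          mul_nonneg hppos.le hM2nn]
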